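/- Every simple max-projective right R-module is projective. -/
import Mathlib


universe u v

/-- A module `M` is *max-projective* if every homomorphism `M → R/I`, for `I` a
maximal right ideal of `R`, factors through the canonical projection `R → R/I`. -/
def MaxProjective (R : Type u) [Ring R] (M : Type v) [AddCommGroup M] [Module R M] : Prop :=
  ∀ I : Submodule R R, IsCoatom I → ∀ g : M →ₗ[R] R ⧸ I,
    ∃ h : M →ₗ[R] R, I.mkQ.comp h = g

/-- Every simple max-projective module is projective. -/
theorem simple_maxProjective_is_projective (R : Type u) [Ring R]
    (M : Type v) [AddCommGroup M] [Module R M]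
    (hs : IsSimpleModule R M) (hmp : MaxProjective R M) :
    Module.Projective R M := by
  have := IsSimpleModule.nontrivial R M
  obtain ⟨m, hm⟩ := exists_ne (0 : M)
  set f := LinearMap.toSpanSingleton R M m with hf
  have hsurj : Function.Surjective f := IsSimpleModule.toSpanSingleton_surjective R hm
  set I := LinearMap.ker f with hI
  have hcoatom : IsCoatom I := by
    rw [← isSimpleModule_iff_isCoatom]
    exact IsSimpleModule.congr (LinearMap.quotKerEquivOfSurjective _ hsurj)
  set e := LinearMap.quotKerEquivOfSurjective f hsurj with he
  obtain ⟨h, hh⟩ := hmp I hcoatom (e.symm : M →ₗ[R] R ⧸ I)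
  refine Module.Projective.of_split h ((e : (R ⧸ I) →ₗ[R] M).comp I.mkQ) ?_
  rw [LinearMap.comp_assoc, hh]
  ext x
  simp
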